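/- Let J = (1/2) ∑_i (V^i + m_i v^{iT} v^i) be the total energy, where V^i = ∑_{j≠i} V^{ij}(‖x^i - x^j‖) with symmetric potentials V^{ij} = V^{ji}. Along solutions of ẋ^i = v^i, m_i v̇^i = -∑_{j∈N_i} w_{ij}(v^i - v^j) - ∑_{j≠i} ∇_{x^i} V^{ij}, the time derivative satisfies dJ/dt = -(1/2) v^T ((L + L^T) ⊗ I_n) v ≤ 0, where L is the Laplacian of the weight matrix W. -/

import Mathlib

open Matrix BigOperators Kronecker

private lemma stmt12_quad_aux {N : ℕ} (w : Fin N → Fin N → ℝ) (hwd : ∀ i, w i i = 0)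
    (L : Matrix (Fin N) (Fin N) ℝ)
    (hL : ∀ i j, L i j = if i = j then ∑ k, w i k else -(w i j))
    (a : Fin N → ℝ) :
    ∑ i, a i * (∑ j, (L i j + L j i) * a j) =
      2 * (∑ i, ∑ j, w i j * a i ^ 2) - 2 * (∑ i, ∑ j, w i j * (a i * a j)) := by
  have h1 : ∀ i, ∑ j, L i j * a j = (∑ c, w i c) * a i - ∑ j, w i j * a j := by
    intro i
    have e : ∀ j, L i j * a j = (if i = j then (∑ c, w i c) * a j else 0) - w i j * a j := by
      intro j; rw [hL]; by_cases h : i = j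
      · subst h; simp [hwd]
      · simp [h]
    simp_rw [e, Finset.sum_sub_distrib, Finset.sum_ite_eq, Finset.mem_univ, if_true]
  have h2 : ∀ i, ∑ j, L j i * a j = (∑ c, w i c) * a i - ∑ j, w j i * a j := by
    intro i
    have e : ∀ j, L j i * a j = (if j = i then (∑ c, w j c) * a j else 0) - w j i * a j := by
      intro j; rw [hL]; by_cases h : j = i
      · subst h; simp [hwd]
      · simp [h]
    simp_rw [e, Finset.sum_sub_distrib, Finset.sum_ite_eq', Finset.mem_univ, if_true]
  have split : ∀ i, a i * (∑ j, (L i j + L j i) * a j)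
      = a i * (∑ j, L i j * a j) + a i * (∑ j, L j i * a j) := by
    intro i
    simp_rw [add_mul, Finset.sum_add_distrib, mul_add]
  simp_rw [split, h1, h2, Finset.sum_add_distrib]
  have e1 : ∑ i, a i * ((∑ c, w i c) * a i - ∑ j, w i j * a j)
      = (∑ i, ∑ j, w i j * a i ^ 2) - ∑ i, ∑ j, w i j * (a i * a j) := by
    rw [← Finset.sum_sub_distrib]
    apply Finset.sum_congr rfl; intro i _
    rw [mul_sub]
    congr 1
    · rw [← Finset.sum_mul]; ring
    · rw [Finset.mul_sum]; apply Finset.sum_congr rfl; intro j _; ring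
  have e2 : ∑ i, a i * ((∑ c, w i c) * a i - ∑ j, w j i * a j)
      = (∑ i, ∑ j, w i j * a i ^ 2) - ∑ i, ∑ j, w i j * (a i * a j) := by
    rw [← Finset.sum_sub_distrib]
    have step : ∀ i, a i * ((∑ c, w i c) * a i - ∑ j, w j i * a j)
        = (∑ j, w i j * a i ^ 2) - ∑ j, w j i * (a j * a i) := by
      intro i
      rw [mul_sub]
      congr 1
      · rw [← Finset.sum_mul]; ring
      · rw [Finset.mul_sum]; apply Finset.sum_congr rfl; intro j _; ring
    simp_rw [step, Finset.sum_sub_distrib]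
    congr 1
    rw [Finset.sum_comm]
  rw [e1, e2]; ring

private lemma stmt12_pos_aux {N : ℕ} (w : Fin N → Fin N → ℝ) (hw : ∀ i j, 0 ≤ w i j)
    (hbal : ∀ i, ∑ j, w i j = ∑ j, w j i) (a : Fin N → ℝ) :
    ∑ i, ∑ j, w i j * (a i * a j) ≤ ∑ i, ∑ j, w i j * a i ^ 2 := by
  have hS3 : ∑ i, ∑ j, w i j * a j ^ 2 = ∑ i, ∑ j, w i j * a i ^ 2 := by
    rw [Finset.sum_comm]
    apply Finset.sum_congr rfl; intro j _
    rw [← Finset.sum_mul]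
    rw [← hbal j]
    rw [Finset.sum_mul]
  have key : (0:ℝ) ≤ ∑ i, ∑ j, w i j * (a i - a j) ^ 2 := by
    apply Finset.sum_nonneg; intro i _
    apply Finset.sum_nonneg; intro j _
    exact mul_nonneg (hw i j) (sq_nonneg _)
  have expand : ∑ i, ∑ j, w i j * (a i - a j) ^ 2
      = (∑ i, ∑ j, w i j * a i ^ 2) - 2 * (∑ i, ∑ j, w i j * (a i * a j))
        + ∑ i, ∑ j, w i j * a j ^ 2 := by
    have e : ∀ i j, w i j * (a i - a j) ^ 2
        = w i j * a i ^ 2 - 2 * (w i j * (a i * a j)) + w i j * a j ^ 2 := by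
      intro i j; ring
    simp_rw [e, Finset.sum_add_distrib, Finset.sum_sub_distrib, ← Finset.mul_sum]
  rw [hS3] at expand
  linarith

/-- Along solutions, the total energy
`J = (1/2) ∑ᵢ (Vⁱ + mᵢ ‖vⁱ‖²)` satisfies
`dJ/dt = -(1/2) vᵀ ((L + Lᵀ) ⊗ Iₙ) v ≤ 0`.  Here `Vp i j t` is the value of the
pairwise potential `Vⁱʲ` along the solution and `f i j t = ∇_{xⁱ}Vⁱʲ`. -/
theorem stmt_12 (N n : ℕ) (m : Fin N → ℝ) (hm : ∀ i, 0 < m i)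
    (w : Fin N → Fin N → ℝ) (hw : ∀ i j, 0 ≤ w i j) (hwd : ∀ i, w i i = 0)
    (hbal : ∀ i, ∑ j, w i j = ∑ j, w j i)
    (L : Matrix (Fin N) (Fin N) ℝ)
    (hL : ∀ i j, L i j = if i = j then ∑ k, w i k else -(w i j))
    (v : Fin N → ℝ → Fin n → ℝ)
    (Vp : Fin N → Fin N → ℝ → ℝ)
    (f : Fin N → Fin N → ℝ → Fin n → ℝ)
    (hVsym : ∀ i j t, Vp i j t = Vp j i t)
    (hfa : ∀ i j t k, f i j t k = -(f j i t k))
    (hfd : ∀ i t, f i i t = 0)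
    (hVdyn : ∀ i j t, i ≠ j →
      HasDerivAt (Vp i j) (∑ k, f i j t k * (v i t k - v j t k)) t)
    (hdyn : ∀ i t k, HasDerivAt (fun s => v i s k)
      ((1 / m i) * (-(∑ j, w i j * (v i t k - v j t k)) - ∑ j, f i j t k)) t)
    (t : ℝ) :
    HasDerivAt
      (fun s => (1 / 2) * ∑ i, ((∑ j ∈ Finset.univ.erase i, Vp i j s)
        + m i * ∑ k, (v i s k) ^ 2))
      (-(1 / 2) * ((fun p : Fin N × Fin n => v p.1 t p.2) ⬝ᵥ
        (((L + Lᵀ) ⊗ₖ (1 : Matrix (Fin n) (Fin n) ℝ)) *ᵥ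
          (fun p : Fin N × Fin n => v p.1 t p.2)))) t ∧
    -(1 / 2) * ((fun p : Fin N × Fin n => v p.1 t p.2) ⬝ᵥ
        (((L + Lᵀ) ⊗ₖ (1 : Matrix (Fin n) (Fin n) ℝ)) *ᵥ
          (fun p : Fin N × Fin n => v p.1 t p.2))) ≤ 0 := by
  classical
  set F : ℝ := ∑ i, ∑ j, ∑ k, f i j t k * v i t k with hF
  set S1 : ℝ := ∑ i, ∑ j, ∑ k, w i j * (v i t k)^2 with hS1def
  set S2 : ℝ := ∑ i, ∑ j, ∑ k, w i j * (v i t k * v j t k) with hS2def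
  have reorder : ∀ (g : Fin N → Fin N → Fin n → ℝ),
      ∑ k, ∑ i, ∑ j, g i j k = ∑ i, ∑ j, ∑ k, g i j k := by
    intro g
    rw [Finset.sum_comm]
    apply Finset.sum_congr rfl; intro i _
    rw [Finset.sum_comm]
  -- the quadratic form equals 2*S1 - 2*S2
  have hquad : ((fun p : Fin N × Fin n => v p.1 t p.2) ⬝ᵥ
      (((L + Lᵀ) ⊗ₖ (1 : Matrix (Fin n) (Fin n) ℝ)) *ᵥ
        (fun p : Fin N × Fin n => v p.1 t p.2))) = 2*S1 - 2*S2 := by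
    have step1 : ((fun p : Fin N × Fin n => v p.1 t p.2) ⬝ᵥ
        (((L + Lᵀ) ⊗ₖ (1 : Matrix (Fin n) (Fin n) ℝ)) *ᵥ
          (fun p : Fin N × Fin n => v p.1 t p.2)))
        = ∑ k, ∑ i, v i t k * (∑ j, (L i j + L j i) * v j t k) := by
      rw [dotProduct, Fintype.sum_prod_type]
      rw [Finset.sum_comm]
      apply Finset.sum_congr rfl; intro k _
      apply Finset.sum_congr rfl; intro i _
      congr 1
      rw [mulVec, dotProduct, Fintype.sum_prod_type]
      apply Finset.sum_congr rfl; intro j _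
      simp [kroneckerMap_apply, Matrix.one_apply, mul_ite, ite_mul,
        Finset.sum_ite_eq, Matrix.transpose_apply]
    rw [step1]
    have step2 : ∀ k : Fin n, ∑ i, v i t k * (∑ j, (L i j + L j i) * v j t k)
        = 2 * (∑ i, ∑ j, w i j * (v i t k) ^ 2)
          - 2 * (∑ i, ∑ j, w i j * (v i t k * v j t k)) :=
      fun k => stmt12_quad_aux w hwd L hL (fun i => v i t k)
    simp_rw [step2, Finset.sum_sub_distrib, ← Finset.mul_sum]
    rw [hS1def, hS2def, ← reorder (fun i j k => w i j * (v i t k)^2),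
      ← reorder (fun i j k => w i j * (v i t k * v j t k))]
  -- S2 ≤ S1
  have hpos : S2 ≤ S1 := by
    rw [hS1def, hS2def, ← reorder (fun i j k => w i j * (v i t k)^2),
      ← reorder (fun i j k => w i j * (v i t k * v j t k))]
    apply Finset.sum_le_sum
    intro k _
    have h := stmt12_pos_aux w hw hbal (fun i => v i t k)
    calc ∑ i, ∑ j, w i j * (v i t k * v j t k)
        ≤ ∑ i, ∑ j, w i j * (v i t k) ^ 2 := h
      _ = ∑ i, ∑ j, w i j * (v i t k) ^ 2 := rfl
  -- derivative
  have hnat : HasDerivAt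
      (fun s => (1 / 2 : ℝ) * ∑ i, ((∑ j ∈ Finset.univ.erase i, Vp i j s)
        + m i * ∑ k, (v i s k) ^ 2))
      ((1 / 2 : ℝ) * ∑ i, ((∑ j ∈ Finset.univ.erase i,
          ∑ k, f i j t k * (v i t k - v j t k))
        + m i * ∑ k, (((2:ℕ) : ℝ) * v i t k ^ (2 - 1) *
            ((1 / m i) * (-(∑ j, w i j * (v i t k - v j t k)) - ∑ j, f i j t k))))) t := by
    apply HasDerivAt.const_mul
    apply HasDerivAt.fun_sum
    intro i _
    apply HasDerivAt.add
    · exact HasDerivAt.fun_sum (fun j hj => hVdyn i j t (Finset.ne_of_mem_erase hj).symm)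
    · exact (HasDerivAt.fun_sum (fun k _ => (hdyn i t k).pow 2)).const_mul (m i)
  -- the natural derivative value equals S2 - S1
  have hval : ((1 / 2 : ℝ) * ∑ i, ((∑ j ∈ Finset.univ.erase i,
          ∑ k, f i j t k * (v i t k - v j t k))
        + m i * ∑ k, (((2:ℕ) : ℝ) * v i t k ^ (2 - 1) *
            ((1 / m i) * (-(∑ j, w i j * (v i t k - v j t k)) - ∑ j, f i j t k)))))
      = S2 - S1 := by
    have hA : ∀ i, (∑ j ∈ Finset.univ.erase i, ∑ k, f i j t k * (v i t k - v j t k))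
        = ∑ j, ∑ k, f i j t k * (v i t k - v j t k) := by
      intro i
      apply Finset.sum_erase
      simp [hfd i t]
    have hB : ∀ i, m i * ∑ k, (((2:ℕ) : ℝ) * v i t k ^ (2 - 1) *
            ((1 / m i) * (-(∑ j, w i j * (v i t k - v j t k)) - ∑ j, f i j t k)))
        = ∑ k, 2 * v i t k *
            (-(∑ j, w i j * (v i t k - v j t k)) - ∑ j, f i j t k) := by
      intro i
      rw [Finset.mul_sum]
      apply Finset.sum_congr rfl; intro k _
      have hm' : m i ≠ 0 := (hm i).ne'
      field_simp
      try ring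
    simp_rw [hA, hB]
    -- sum of potential derivative terms = 2 * F
    have hFneg : ∑ i, ∑ j, ∑ k, f i j t k * v j t k = -F := by
      rw [Finset.sum_comm]
      have e : ∀ j i, (∑ k, f i j t k * v j t k) = -(∑ k, f j i t k * v j t k) := by
        intro j i
        rw [← Finset.sum_neg_distrib]
        apply Finset.sum_congr rfl; intro k _
        rw [hfa i j t k]; ring
      simp_rw [e, Finset.sum_neg_distrib]
      rfl
    have hAsum : ∑ i, ∑ j, ∑ k, f i j t k * (v i t k - v j t k) = 2 * F := by
      have e : ∀ i j, (∑ k, f i j t k * (v i t k - v j t k))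
          = (∑ k, f i j t k * v i t k) - ∑ k, f i j t k * v j t k := by
        intro i j
        rw [← Finset.sum_sub_distrib]
        apply Finset.sum_congr rfl; intro k _; ring
      simp_rw [e, Finset.sum_sub_distrib]
      try rw [hFneg]
      try rw [← hF]
      try ring
    -- sum of kinetic derivative terms
    have hBsum : ∑ i, ∑ k, 2 * v i t k *
          (-(∑ j, w i j * (v i t k - v j t k)) - ∑ j, f i j t k)
        = -2 * (S1 - S2) - 2 * F := by
      have e : ∀ i k, 2 * v i t k *
            (-(∑ j, w i j * (v i t k - v j t k)) - ∑ j, f i j t k)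
          = -(∑ j, 2 * (w i j * ((v i t k)^2 - v i t k * v j t k)))
            - ∑ j, 2 * (f i j t k * v i t k) := by
        intro i k
        have l1 : -(∑ j, w i j * (v i t k - v j t k)) - ∑ j, f i j t k
            = ∑ j, (-(w i j * (v i t k - v j t k)) - f i j t k) := by
          rw [← Finset.sum_neg_distrib, ← Finset.sum_sub_distrib]
        rw [l1, Finset.mul_sum, ← Finset.sum_neg_distrib, ← Finset.sum_sub_distrib]
        apply Finset.sum_congr rfl; intro j _
        ring
      simp_rw [e, Finset.sum_sub_distrib, Finset.sum_neg_distrib]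
      have r1 : ∑ i, ∑ k, ∑ j, 2 * (w i j * ((v i t k)^2 - v i t k * v j t k))
          = 2 * (S1 - S2) := by
        have : ∀ i, ∑ k, ∑ j, 2 * (w i j * ((v i t k)^2 - v i t k * v j t k))
            = ∑ j, ∑ k, 2 * (w i j * ((v i t k)^2 - v i t k * v j t k)) := by
          intro i; rw [Finset.sum_comm]
        simp_rw [this]
        have ex : ∀ (i j : Fin N) (k' : Fin n),
            2 * (w i j * ((v i t k')^2 - v i t k' * v j t k'))
            = 2 * (w i j * (v i t k')^2) - 2 * (w i j * (v i t k' * v j t k')) := by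
          intro i j k'; ring
        simp_rw [ex, Finset.sum_sub_distrib, ← Finset.mul_sum]
        rw [hS1def, hS2def]
        rw [mul_sub]
        simp_rw [Finset.mul_sum]
      have r2 : ∑ i, ∑ k, ∑ j, 2 * (f i j t k * v i t k) = 2 * F := by
        have : ∀ i, ∑ k, ∑ j, 2 * (f i j t k * v i t k)
            = ∑ j, ∑ k, 2 * (f i j t k * v i t k) := by
          intro i; rw [Finset.sum_comm]
        simp_rw [this, ← Finset.mul_sum]
        try rw [hF]
      rw [r1, r2]; ring
    -- combine
    rw [Finset.sum_add_distrib, hAsum, hBsum]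
    ring
  constructor
  · have goalval : -(1/2 : ℝ) * ((fun p : Fin N × Fin n => v p.1 t p.2) ⬝ᵥ
      (((L + Lᵀ) ⊗ₖ (1 : Matrix (Fin n) (Fin n) ℝ)) *ᵥ
        (fun p : Fin N × Fin n => v p.1 t p.2))) = S2 - S1 := by
      rw [hquad]; ring
    rw [goalval, ← hval]
    exact hnat
  · rw [hquad]; nlinarith
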